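/- Coordinate-wise smoothing gradient estimation error: if g : ℝ^d → ℝ is differentiable with L-Lipschitz gradient and μ > 0, then for every x ∈ ℝ^d, ‖∇̂_coo g(x) − ∇g(x)‖² ≤ L² d μ². -/

import Mathlib

open InnerProductSpace

lemma euclidean_sum_apply {d : ℕ} (f : Fin d → EuclideanSpace ℝ (Fin d)) (j : Fin d) :
    (∑ i, f i) j = ∑ i, f i j := by
  induction (Finset.univ : Finset (Fin d)) using Finset.induction with
  | empty => simp
  | insert _ _ h ih => rw [Finset.sum_insert h, Finset.sum_insert h, PiLp.add_apply, ih]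

lemma taylor_bound {d : ℕ} (g : EuclideanSpace ℝ (Fin d) → ℝ) (L : ℝ) (hL : 0 ≤ L)
    (hdiff : Differentiable ℝ g)
    (hLip : ∀ u v, ‖gradient g u - gradient g v‖ ≤ L * ‖u - v‖)
    (x y : EuclideanSpace ℝ (Fin d)) :
    |g y - g x - ⟪gradient g x, y - x⟫_ℝ| ≤ L * ‖y - x‖ ^ 2 := by
  set gx := gradient g x
  set φ : EuclideanSpace ℝ (Fin d) → ℝ := fun u => g u - (toDual ℝ _ gx) u with hφ
  have hder : ∀ u, HasFDerivAt φ ((toDual ℝ _ (gradient g u)) - (toDual ℝ _ gx)) u := by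
    intro u
    exact ((hdiff u).hasGradientAt.hasFDerivAt).sub ((toDual ℝ _ gx).hasFDerivAt)
  have hbound : ∀ u ∈ segment ℝ x y, ‖fderiv ℝ φ u‖ ≤ L * ‖y - x‖ := by
    intro u hu
    rw [(hder u).fderiv]
    have h1 : (toDual ℝ (EuclideanSpace ℝ (Fin d)) (gradient g u)) - toDual ℝ _ gx
        = toDual ℝ _ (gradient g u - gx) := by simp
    rw [h1, LinearIsometryEquiv.norm_map]
    calc ‖gradient g u - gx‖ ≤ L * ‖u - x‖ := hLip u x
    _ ≤ L * ‖y - x‖ := by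
        rw [segment_eq_image'] at hu
        obtain ⟨θ, hθ, rfl⟩ := hu
        have h2 : x + θ • (y - x) - x = θ • (y - x) := by abel
        rw [h2, norm_smul]
        have h3 : |θ| ≤ 1 := by rw [abs_of_nonneg hθ.1]; exact hθ.2
        rw [Real.norm_eq_abs]
        nlinarith [mul_nonneg (mul_nonneg hL (sub_nonneg.2 h3)) (norm_nonneg (y - x))]
  have key := Convex.norm_image_sub_le_of_norm_fderiv_le
    (fun u _ => (hder u).differentiableAt) hbound (convex_segment x y)
    (left_mem_segment ℝ x y) (right_mem_segment ℝ x y)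
  have hφyx : φ y - φ x = g y - g x - ⟪gx, y - x⟫_ℝ := by
    simp [hφ, toDual_apply_apply, inner_sub_right]; ring
  rw [hφyx] at key
  calc |g y - g x - ⟪gx, y - x⟫_ℝ| ≤ L * ‖y - x‖ * ‖y - x‖ := key
  _ = L * ‖y - x‖ ^ 2 := by ring

/-- The coordinate-wise smoothing gradient estimator of `g` at `x`
with smoothing parameter `μ`. -/
noncomputable def cooGrad {d : ℕ} (g : EuclideanSpace ℝ (Fin d) → ℝ) (μ : ℝ)
    (x : EuclideanSpace ℝ (Fin d)) : EuclideanSpace ℝ (Fin d) :=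
  ∑ j : Fin d,
    ((g (x + μ • EuclideanSpace.single j 1) - g (x - μ • EuclideanSpace.single j 1)) / (2 * μ)) •
      EuclideanSpace.single j 1

/-- Coordinate-wise smoothing gradient estimation error:
`‖∇̂_coo g(x) − ∇g(x)‖² ≤ L² d μ²`. -/
theorem cooGrad_error_bound
    (d : ℕ) (hd : 1 ≤ d)
    (g : EuclideanSpace ℝ (Fin d) → ℝ)
    (L : ℝ) (hL : 0 < L)
    (hdiff : Differentiable ℝ g)
    (hLip : ∀ u v, ‖gradient g u - gradient g v‖ ≤ L * ‖u - v‖)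
    (μ : ℝ) (hμ : 0 < μ)
    (x : EuclideanSpace ℝ (Fin d)) :
    ‖cooGrad g μ x - gradient g x‖ ^ 2 ≤ L ^ 2 * d * μ ^ 2 := by
  have hcoord : ∀ j : Fin d, |(cooGrad g μ x - gradient g x) j| ≤ L * μ := by
    intro j
    set e : EuclideanSpace ℝ (Fin d) := EuclideanSpace.single j 1 with he
    set gj : ℝ := gradient g x j with hgj
    have hnormμe : ‖μ • e‖ = μ := by
      rw [norm_smul, he, EuclideanSpace.norm_single, Real.norm_eq_abs, norm_one,
        abs_of_pos hμ, mul_one]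
    have hinner : ⟪gradient g x, μ • e⟫_ℝ = μ * gj := by
      rw [he, inner_smul_right, EuclideanSpace.inner_single_right]; simp [hgj]
    have h1 := taylor_bound g L hL.le hdiff hLip x (x + μ • e)
    have h2 := taylor_bound g L hL.le hdiff hLip x (x - μ • e)
    rw [add_sub_cancel_left, hinner, hnormμe] at h1
    have hsub : x - μ • e - x = -(μ • e) := by abel
    rw [hsub, inner_neg_right, hinner, norm_neg, hnormμe] at h2
    have hval : (cooGrad g μ x - gradient g x) j
        = (g (x + μ • e) - g (x - μ • e)) / (2 * μ) - gj := by
      rw [PiLp.sub_apply]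
      congr 1
      rw [cooGrad, euclidean_sum_apply]
      simp [EuclideanSpace.single_apply, he]
    rw [hval]
    have heq : (g (x + μ • e) - g (x - μ • e)) / (2 * μ) - gj
        = ((g (x + μ • e) - g x - μ * gj) - (g (x - μ • e) - g x - -(μ * gj))) / (2 * μ) := by
      field_simp; ring
    rw [heq, abs_div, abs_of_pos (by positivity : (0:ℝ) < 2 * μ), div_le_iff₀ (by positivity)]
    calc |(g (x + μ • e) - g x - μ * gj) - (g (x - μ • e) - g x - -(μ * gj))|
        ≤ |g (x + μ • e) - g x - μ * gj| + |g (x - μ • e) - g x - -(μ * gj)| := abs_sub _ _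
      _ ≤ L * μ ^ 2 + L * μ ^ 2 := add_le_add h1 h2
      _ = L * μ * (2 * μ) := by ring
  rw [EuclideanSpace.norm_eq, Real.sq_sqrt (Finset.sum_nonneg fun i _ => by positivity)]
  calc ∑ i : Fin d, ‖(cooGrad g μ x - gradient g x) i‖ ^ 2
      ≤ ∑ i : Fin d, (L * μ) ^ 2 := by
        apply Finset.sum_le_sum
        intro i _
        rw [Real.norm_eq_abs]
        exact pow_le_pow_left₀ (abs_nonneg _) (hcoord i) 2
    _ = d * (L * μ) ^ 2 := by rw [Finset.sum_const, Finset.card_univ, Fintype.card_fin,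
        nsmul_eq_mul]
    _ = L ^ 2 * d * μ ^ 2 := by ring
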